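/- The number of permutations of [n] with k weak exceedances, ℓ crossings, and m nestings equals the number of permutations of [n] with k weak exceedances, m crossings, and ℓ nestings. -/

import Mathlib

open Finset

/-- Number of weak exceedances of a permutation. -/
def wexc (n : ℕ) (σ : Equiv.Perm (Fin n)) : ℕ :=
  (univ.filter fun i : Fin n => i ≤ σ i).card

/-- Number of crossings of a permutation (pairs p = (i,j)). -/
def crossings (n : ℕ) (σ : Equiv.Perm (Fin n)) : ℕ :=
  (univ.filter fun p : Fin n × Fin n =>
      p.2 < p.1 ∧ p.1 ≤ σ p.2 ∧ σ p.2 < σ p.1).card +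
    (univ.filter fun p : Fin n × Fin n =>
      p.1 < p.2 ∧ σ p.2 < p.1 ∧ σ p.1 < σ p.2).card

/-- Number of nestings of a permutation (pairs p = (i,j)). -/
def nestings (n : ℕ) (σ : Equiv.Perm (Fin n)) : ℕ :=
  (univ.filter fun p : Fin n × Fin n =>
      p.2 < p.1 ∧ p.1 ≤ σ p.1 ∧ σ p.1 < σ p.2).card +
    (univ.filter fun p : Fin n × Fin n =>
      p.1 < p.2 ∧ σ p.1 < p.1 ∧ σ p.2 < σ p.1).card

variable {n : ℕ}

/-- nesting count at index i -/
def aF (σ : Equiv.Perm (Fin n)) (i : Fin n) : ℕ :=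
  if i ≤ σ i then (univ.filter fun j => j < i ∧ σ i < σ j).card
  else (univ.filter fun j => i < j ∧ σ j < σ i).card

/-- crossing count at index i -/
def cF (σ : Equiv.Perm (Fin n)) (i : Fin n) : ℕ :=
  if i ≤ σ i then (univ.filter fun j => j < i ∧ i ≤ σ j ∧ σ j < σ i).card
  else (univ.filter fun j => i < j ∧ σ i < σ j ∧ σ j < i).card

/-- total count at index i -/
def hF (σ : Equiv.Perm (Fin n)) (i : Fin n) : ℕ :=
  if i ≤ σ i then (univ.filter fun j => j < i ∧ i ≤ σ j).card
  else (univ.filter fun j => i < j ∧ σ j < i).card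

lemma aF_add_cF (σ : Equiv.Perm (Fin n)) (i : Fin n) : aF σ i + cF σ i = hF σ i := by
  unfold aF cF hF
  by_cases h : i ≤ σ i
  · simp only [if_pos h]
    rw [← Finset.card_union_of_disjoint]
    · congr 1
      ext j
      simp only [mem_union, mem_filter, mem_univ, true_and]
      constructor
      · rintro (⟨h1, h2⟩ | ⟨h1, h2, h3⟩)
        · exact ⟨h1, le_of_lt (lt_of_le_of_lt h h2)⟩
        · exact ⟨h1, h2⟩
      · rintro ⟨h1, h2⟩
        rcases lt_or_gt_of_ne (fun e : σ j = σ i => absurd (σ.injective e) (ne_of_lt h1)) with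
          h3 | h3
        · exact Or.inr ⟨h1, h2, h3⟩
        · exact Or.inl ⟨h1, h3⟩
    · rw [Finset.disjoint_left]
      intro j hj hj'
      simp only [mem_filter] at hj hj'
      exact absurd hj'.2.2.2 (not_lt.2 (le_of_lt hj.2.2))
  · simp only [if_neg h]
    push_neg at h
    rw [← Finset.card_union_of_disjoint]
    · congr 1
      ext j
      simp only [mem_union, mem_filter, mem_univ, true_and]
      constructor
      · rintro (⟨h1, h2⟩ | ⟨h1, h2, h3⟩)
        · exact ⟨h1, lt_trans h2 h⟩
        · exact ⟨h1, h3⟩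
      · rintro ⟨h1, h2⟩
        rcases lt_or_gt_of_ne (fun e : σ j = σ i => absurd (σ.injective e) (ne_of_gt h1)) with
          h3 | h3
        · exact Or.inl ⟨h1, h3⟩
        · exact Or.inr ⟨h1, h3, h2⟩
    · rw [Finset.disjoint_left]
      intro j hj hj'
      simp only [mem_filter] at hj hj'
      exact absurd hj'.2.2.1 (not_lt.2 (le_of_lt hj.2.2))

lemma card_filter_prod (P : Fin n × Fin n → Prop) [DecidablePred P] :
    (univ.filter P).card = ∑ i : Fin n, (univ.filter fun j => P (i, j)).card := by
  rw [Finset.card_filter, Fintype.sum_prod_type]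
  exact Finset.sum_congr rfl fun i _ => (Finset.card_filter _ _).symm

lemma nestings_eq (σ : Equiv.Perm (Fin n)) : nestings n σ = ∑ i : Fin n, aF σ i := by
  unfold nestings
  rw [card_filter_prod, card_filter_prod, ← Finset.sum_add_distrib]
  refine Finset.sum_congr rfl fun i _ => ?_
  unfold aF
  by_cases h : i ≤ σ i
  · rw [if_pos h]
    have h2 : (univ.filter fun j : Fin n => i < j ∧ σ i < i ∧ σ j < σ i) = ∅ := by
      refine Finset.filter_false_of_mem fun j _ => ?_
      rintro ⟨-, h3, -⟩
      exact absurd h3 (not_lt.2 h)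
    rw [h2, Finset.card_empty, add_zero]
    congr 1
    refine Finset.filter_congr fun j _ => ?_
    constructor
    · rintro ⟨h1, -, h3⟩; exact ⟨h1, h3⟩
    · rintro ⟨h1, h3⟩; exact ⟨h1, h, h3⟩
  · rw [if_neg h]
    push_neg at h
    have h2 : (univ.filter fun j : Fin n => j < i ∧ i ≤ σ i ∧ σ i < σ j) = ∅ := by
      refine Finset.filter_false_of_mem fun j _ => ?_
      rintro ⟨-, h3, -⟩
      exact absurd h (not_lt.2 h3)
    rw [h2, Finset.card_empty, zero_add]
    congr 1
    refine Finset.filter_congr fun j _ => ?_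
    constructor
    · rintro ⟨h1, -, h3⟩; exact ⟨h1, h3⟩
    · rintro ⟨h1, h3⟩; exact ⟨h1, h, h3⟩

lemma crossings_eq (σ : Equiv.Perm (Fin n)) : crossings n σ = ∑ i : Fin n, cF σ i := by
  unfold crossings
  rw [card_filter_prod, card_filter_prod, ← Finset.sum_add_distrib]
  refine Finset.sum_congr rfl fun i _ => ?_
  unfold cF
  by_cases h : i ≤ σ i
  · rw [if_pos h]
    have h2 : (univ.filter fun j : Fin n => i < j ∧ σ j < i ∧ σ i < σ j) = ∅ := by
      refine Finset.filter_false_of_mem fun j _ => ?_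
      rintro ⟨-, h3, h4⟩
      exact absurd (lt_trans h4 h3) (not_lt.2 h)
    rw [h2, Finset.card_empty, add_zero]
  · rw [if_neg h]
    push_neg at h
    have h2 : (univ.filter fun j : Fin n => j < i ∧ i ≤ σ j ∧ σ j < σ i) = ∅ := by
      refine Finset.filter_false_of_mem fun j _ => ?_
      rintro ⟨-, h3, h4⟩
      exact absurd h3 (not_le.2 (lt_trans h4 h))
    rw [h2, Finset.card_empty, zero_add]
    congr 1
    refine Finset.filter_congr fun j _ => ?_
    constructor
    · rintro ⟨h1, h3, h4⟩; exact ⟨h1, h4, h3⟩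
    · rintro ⟨h1, h3, h4⟩; exact ⟨h1, h4, h3⟩

lemma swap_lt_iff {p q k j : Fin n} (hp : p < k) (hq : q < k) :
    Equiv.swap p q j < k ↔ j < k := by
  rcases eq_or_ne j p with rfl | hjp
  · rw [Equiv.swap_apply_left]; exact iff_of_true hq hp
  rcases eq_or_ne j q with rfl | hjq
  · rw [Equiv.swap_apply_right]; exact iff_of_true hp hq
  · rw [Equiv.swap_apply_of_ne_of_ne hjp hjq]

lemma swap_gt_iff {p q k j : Fin n} (hp : k < p) (hq : k < q) :
    k < Equiv.swap p q j ↔ k < j := by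
  rcases eq_or_ne j p with rfl | hjp
  · rw [Equiv.swap_apply_left]; exact iff_of_true hq hp
  rcases eq_or_ne j q with rfl | hjq
  · rw [Equiv.swap_apply_right]; exact iff_of_true hp hq
  · rw [Equiv.swap_apply_of_ne_of_ne hjp hjq]

lemma moveU (σ : Equiv.Perm (Fin n)) {p q : Fin n} (hpq : p < q) (hp : q ≤ σ p) (hq : q ≤ σ q)
    (H : ∀ j, j < q → j ≠ p → (σ j < σ p ∧ σ j < σ q) ∨ (σ p < σ j ∧ σ q < σ j)) :
    (∀ k, k ≤ σ k ↔ k ≤ (σ * Equiv.swap p q) k) ∧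
    (∀ v, σ.symm v ≤ v ↔ (σ * Equiv.swap p q).symm v ≤ v) ∧
    hF σ = hF (σ * Equiv.swap p q) ∧
    (∀ k, k ≠ q → aF (σ * Equiv.swap p q) k = aF σ k) ∧
    (σ p < σ q → aF (σ * Equiv.swap p q) q = aF σ q + 1) ∧
    (σ q < σ p → aF σ q = aF (σ * Equiv.swap p q) q + 1) := by
  have pnq : p ≠ q := ne_of_lt hpq
  have τapp : ∀ j, (σ * Equiv.swap p q) j = σ (Equiv.swap p q j) := fun j => rfl
  have τp : (σ * Equiv.swap p q) p = σ q := by rw [τapp, Equiv.swap_apply_left]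
  have τq : (σ * Equiv.swap p q) q = σ p := by rw [τapp, Equiv.swap_apply_right]
  have τo : ∀ j, j ≠ p → j ≠ q → (σ * Equiv.swap p q) j = σ j := fun j h1 h2 => by
    rw [τapp, Equiv.swap_apply_of_ne_of_ne h1 h2]
  -- (1)
  have hE : ∀ k, k ≤ σ k ↔ k ≤ (σ * Equiv.swap p q) k := by
    intro k
    rcases eq_or_ne p k with rfl | hkp
    · rw [τp]; exact iff_of_true (le_of_lt (lt_of_lt_of_le hpq hp)) (le_of_lt (lt_of_lt_of_le hpq hq))
    rcases eq_or_ne q k with rfl | hkq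
    · rw [τq]; exact iff_of_true hq hp
    · rw [τo k hkp.symm hkq.symm]
  -- (2)
  have hFs : ∀ v, σ.symm v ≤ v ↔ (σ * Equiv.swap p q).symm v ≤ v := by
    intro v
    have tsymm : (σ * Equiv.swap p q).symm v = Equiv.swap p q (σ.symm v) := by
      rw [← Equiv.Perm.inv_def, mul_inv_rev, Equiv.Perm.mul_apply, Equiv.swap_inv,
        Equiv.Perm.inv_def]
    rcases eq_or_ne (σ.symm v) p with e | e
    · have hv : v = σ p := by rw [← e, Equiv.apply_symm_apply]
      rw [tsymm, e, Equiv.swap_apply_left, hv]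
      exact iff_of_true (le_of_lt (lt_of_lt_of_le hpq hp)) hp
    rcases eq_or_ne (σ.symm v) q with e2 | e2
    · have hv : v = σ q := by rw [← e2, Equiv.apply_symm_apply]
      rw [tsymm, e2, Equiv.swap_apply_right, hv]
      exact iff_of_true hq (le_of_lt (lt_of_lt_of_le hpq hq))
    · rw [tsymm, Equiv.swap_apply_of_ne_of_ne e e2]
  -- (3)
  have hHF : hF σ = hF (σ * Equiv.swap p q) := by
    funext k
    unfold hF
    by_cases hk : k ≤ σ k
    · rw [if_pos hk, if_pos ((hE k).1 hk)]
      by_cases hqk : q < k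
      · have hpk : p < k := lt_trans hpq hqk
        refine Finset.card_equiv (Equiv.swap p q) fun j => ?_
        simp only [mem_filter, mem_univ, true_and, τapp, Equiv.swap_apply_self]
        rw [swap_lt_iff hpk hqk]
      · push_neg at hqk
        refine congrArg Finset.card (Finset.filter_congr fun j _ => ?_)
        refine and_congr_right fun hjk => ?_
        have hjq : j ≠ q := ne_of_lt (lt_of_lt_of_le hjk hqk)
        rcases eq_or_ne p j with rfl | hjp
        · rw [τp]
          exact iff_of_true (le_trans hqk hp) (le_trans hqk hq)
        · rw [τo j hjp.symm hjq]
    · rw [if_neg hk, if_neg fun c => hk ((hE k).2 c)]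
      refine congrArg Finset.card (Finset.filter_congr fun j _ => ?_)
      refine and_congr_right fun hkj => ?_
      rcases eq_or_ne p j with rfl | hjp
      · rw [τp]
        have h1 : k < q := lt_trans hkj hpq
        exact iff_of_false (not_lt.2 (le_trans (le_of_lt h1) hp))
          (not_lt.2 (le_trans (le_of_lt h1) hq))
      rcases eq_or_ne q j with rfl | hjq
      · rw [τq]
        exact iff_of_false (not_lt.2 (le_trans (le_of_lt hkj) hq))
          (not_lt.2 (le_trans (le_of_lt hkj) hp))
      · rw [τo j hjp.symm hjq.symm]
  -- (4)
  have hane : ∀ k, k ≠ q → aF (σ * Equiv.swap p q) k = aF σ k := by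
    intro k hkq
    unfold aF
    rcases eq_or_ne p k with rfl | hkp
    · -- k = p
      have h1 : p ≤ σ p := le_of_lt (lt_of_lt_of_le hpq hp)
      rw [if_pos h1, if_pos ((hE p).1 h1), τp]
      refine congrArg Finset.card (Finset.filter_congr fun j _ => ?_)
      refine and_congr_right fun hjp' => ?_
      have hjp : j ≠ p := ne_of_lt hjp'
      have hjq : j ≠ q := ne_of_lt (lt_trans hjp' hpq)
      rw [τo j hjp hjq]
      rcases H j (lt_trans hjp' hpq) hjp with ⟨c1, c2⟩ | ⟨c1, c2⟩
      · exact iff_of_false (not_lt.2 (le_of_lt c2)) (not_lt.2 (le_of_lt c1))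
      · exact iff_of_true c2 c1
    · by_cases hk : k ≤ σ k
      · rw [if_pos hk, if_pos ((hE k).1 hk), τo k (Ne.symm hkp) hkq]
        by_cases hqk : q < k
        · have hpk : p < k := lt_trans hpq hqk
          refine (Finset.card_equiv (Equiv.swap p q) fun j => ?_).symm
          simp only [mem_filter, mem_univ, true_and, τapp, Equiv.swap_apply_self]
          rw [swap_lt_iff hpk hqk]
        · push_neg at hqk
          have hkq2 : k < q := lt_of_le_of_ne hqk hkq
          refine congrArg Finset.card (Finset.filter_congr fun j _ => ?_)
          refine and_congr_right fun hjk => ?_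
          have hjq : j ≠ q := ne_of_lt (lt_trans hjk hkq2)
          rcases eq_or_ne p j with rfl | hjp
          · rw [τp]
            rcases H k hkq2 (Ne.symm hkp) with ⟨c1, c2⟩ | ⟨c1, c2⟩
            · exact iff_of_true c2 c1
            · exact iff_of_false (not_lt.2 (le_of_lt c2)) (not_lt.2 (le_of_lt c1))
          · rw [τo j hjp.symm hjq]
      · rw [if_neg hk, if_neg fun c => hk ((hE k).2 c), τo k (Ne.symm hkp) hkq]
        by_cases hkp' : k < p
        · have hkq' : k < q := lt_trans hkp' hpq
          refine (Finset.card_equiv (Equiv.swap p q) fun j => ?_).symm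
          simp only [mem_filter, mem_univ, true_and, τapp, Equiv.swap_apply_self]
          rw [swap_gt_iff hkp' hkq']
        · push_neg at hkp'
          have hpk : p < k := lt_of_le_of_ne hkp' hkp
          refine congrArg Finset.card (Finset.filter_congr fun j _ => ?_)
          refine and_congr_right fun hkj => ?_
          rcases eq_or_ne p j with rfl | hjp
          · exact absurd hkj (not_lt.2 (le_of_lt hpk))
          rcases eq_or_ne q j with rfl | hjq
          · rw [τq]
            have hkq2 : k < q := hkj
            rcases H k hkq2 (Ne.symm (ne_of_lt hpk)) with ⟨c1, c2⟩ | ⟨c1, c2⟩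
            · exact iff_of_false (not_lt.2 (le_of_lt c1)) (not_lt.2 (le_of_lt c2))
            · exact iff_of_true c1 c2
          · rw [τo j hjp.symm hjq.symm]
  -- (5)
  have hq' : q ≤ (σ * Equiv.swap p q) q := by rw [τq]; exact hp
  have erase_eq :
      ((univ.filter fun j => j < q ∧ (σ * Equiv.swap p q) q < (σ * Equiv.swap p q) j).erase p)
        = ((univ.filter fun j => j < q ∧ σ q < σ j).erase p) := by
    ext j
    simp only [Finset.mem_erase, mem_filter, mem_univ, true_and]
    constructor
    · rintro ⟨hjp, hjq', hlt⟩
      refine ⟨hjp, hjq', ?_⟩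
      rw [τq, τo j hjp (ne_of_lt hjq')] at hlt
      rcases H j hjq' hjp with ⟨c1, c2⟩ | ⟨c1, c2⟩
      · exact absurd hlt (not_lt.2 (le_of_lt c1))
      · exact c2
    · rintro ⟨hjp, hjq', hlt⟩
      refine ⟨hjp, hjq', ?_⟩
      rw [τq, τo j hjp (ne_of_lt hjq')]
      rcases H j hjq' hjp with ⟨c1, c2⟩ | ⟨c1, c2⟩
      · exact absurd hlt (not_lt.2 (le_of_lt c2))
      · exact c1
  refine ⟨hE, hFs, hHF, hane, ?_, ?_⟩
  · -- inc : σ p < σ q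
    intro hlt
    unfold aF
    rw [if_pos hq', if_pos hq]
    have hmem : p ∈ univ.filter fun j => j < q ∧ (σ * Equiv.swap p q) q < (σ * Equiv.swap p q) j := by
      simp only [mem_filter, mem_univ, true_and]
      exact ⟨hpq, by rw [τq, τp]; exact hlt⟩
    have hnmem : p ∉ univ.filter fun j => j < q ∧ σ q < σ j := by
      simp only [mem_filter, mem_univ, true_and]
      rintro ⟨-, c⟩
      exact absurd hlt (not_lt.2 (le_of_lt c))
    rw [← Finset.card_erase_add_one hmem, erase_eq, Finset.erase_eq_of_notMem hnmem]
  · -- dec : σ q < σ p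
    intro hlt
    unfold aF
    rw [if_pos hq', if_pos hq]
    have hmem : p ∈ univ.filter fun j => j < q ∧ σ q < σ j := by
      simp only [mem_filter, mem_univ, true_and]
      exact ⟨hpq, hlt⟩
    have hnmem : p ∉ univ.filter fun j => j < q ∧ (σ * Equiv.swap p q) q < (σ * Equiv.swap p q) j := by
      simp only [mem_filter, mem_univ, true_and]
      rintro ⟨-, c⟩
      rw [τq, τp] at c
      exact absurd hlt (not_lt.2 (le_of_lt c))
    rw [← Finset.card_erase_add_one hmem, ← erase_eq, Finset.erase_eq_of_notMem hnmem]

lemma moveL (σ : Equiv.Perm (Fin n)) {p q : Fin n} (hpq : p < q) (hp : σ p < p) (hq : σ q < p)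
    (H : ∀ j, p < j → j ≠ q → (σ j < σ p ∧ σ j < σ q) ∨ (σ p < σ j ∧ σ q < σ j)) :
    (∀ k, k ≤ σ k ↔ k ≤ (σ * Equiv.swap p q) k) ∧
    (∀ v, σ.symm v ≤ v ↔ (σ * Equiv.swap p q).symm v ≤ v) ∧
    hF σ = hF (σ * Equiv.swap p q) ∧
    (∀ k, k ≠ p → aF (σ * Equiv.swap p q) k = aF σ k) ∧
    (σ p < σ q → aF (σ * Equiv.swap p q) p = aF σ p + 1) ∧
    (σ q < σ p → aF σ p = aF (σ * Equiv.swap p q) p + 1) := by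
  have pnq : p ≠ q := ne_of_lt hpq
  have τapp : ∀ j, (σ * Equiv.swap p q) j = σ (Equiv.swap p q j) := fun j => rfl
  have τp : (σ * Equiv.swap p q) p = σ q := by rw [τapp, Equiv.swap_apply_left]
  have τq : (σ * Equiv.swap p q) q = σ p := by rw [τapp, Equiv.swap_apply_right]
  have τo : ∀ j, j ≠ p → j ≠ q → (σ * Equiv.swap p q) j = σ j := fun j h1 h2 => by
    rw [τapp, Equiv.swap_apply_of_ne_of_ne h1 h2]
  -- (1)
  have hE : ∀ k, k ≤ σ k ↔ k ≤ (σ * Equiv.swap p q) k := by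
    intro k
    rcases eq_or_ne p k with rfl | hkp
    · rw [τp]; exact iff_of_false (not_le.2 hp) (not_le.2 hq)
    rcases eq_or_ne q k with rfl | hkq
    · rw [τq]
      exact iff_of_false (not_le.2 (lt_trans hq hpq)) (not_le.2 (lt_trans hp hpq))
    · rw [τo k hkp.symm hkq.symm]
  -- (2)
  have hFs : ∀ v, σ.symm v ≤ v ↔ (σ * Equiv.swap p q).symm v ≤ v := by
    intro v
    have tsymm : (σ * Equiv.swap p q).symm v = Equiv.swap p q (σ.symm v) := by
      rw [← Equiv.Perm.inv_def, mul_inv_rev, Equiv.Perm.mul_apply, Equiv.swap_inv,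
        Equiv.Perm.inv_def]
    rcases eq_or_ne (σ.symm v) p with e | e
    · have hv : v = σ p := by rw [← e, Equiv.apply_symm_apply]
      rw [tsymm, e, Equiv.swap_apply_left, hv]
      exact iff_of_false (not_le.2 hp) (not_le.2 (lt_trans hp hpq))
    rcases eq_or_ne (σ.symm v) q with e2 | e2
    · have hv : v = σ q := by rw [← e2, Equiv.apply_symm_apply]
      rw [tsymm, e2, Equiv.swap_apply_right, hv]
      exact iff_of_false (not_le.2 (lt_trans hq hpq)) (not_le.2 hq)
    · rw [tsymm, Equiv.swap_apply_of_ne_of_ne e e2]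
  -- (3)
  have hHF : hF σ = hF (σ * Equiv.swap p q) := by
    funext k
    unfold hF
    by_cases hk : k ≤ σ k
    · rw [if_pos hk, if_pos ((hE k).1 hk)]
      by_cases hqk : q < k
      · have hpk : p < k := lt_trans hpq hqk
        refine Finset.card_equiv (Equiv.swap p q) fun j => ?_
        simp only [mem_filter, mem_univ, true_and, τapp, Equiv.swap_apply_self]
        rw [swap_lt_iff hpk hqk]
      · push_neg at hqk
        refine congrArg Finset.card (Finset.filter_congr fun j _ => ?_)
        refine and_congr_right fun hjk => ?_
        have hjq : j ≠ q := fun e => absurd (lt_of_lt_of_le (e ▸ hjk) hqk) (lt_irrefl q)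
        rcases eq_or_ne p j with rfl | hjp
        · rw [τp]
          exact iff_of_false (not_le.2 (lt_of_lt_of_le hp (le_of_lt hjk)))
            (not_le.2 (lt_of_lt_of_le hq (le_of_lt hjk)))
        · rw [τo j hjp.symm hjq]
    · rw [if_neg hk, if_neg fun c => hk ((hE k).2 c)]
      by_cases hkp : k < p
      · have hkq : k < q := lt_trans hkp hpq
        refine Finset.card_equiv (Equiv.swap p q) fun j => ?_
        simp only [mem_filter, mem_univ, true_and, τapp, Equiv.swap_apply_self]
        rw [swap_gt_iff hkp hkq]
      · push_neg at hkp
        refine congrArg Finset.card (Finset.filter_congr fun j _ => ?_)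
        refine and_congr_right fun hkj => ?_
        rcases eq_or_ne p j with rfl | hjp
        · exact absurd hkj (not_lt.2 hkp)
        rcases eq_or_ne q j with rfl | hjq
        · rw [τq]
          exact iff_of_true (lt_of_lt_of_le hq hkp) (lt_of_lt_of_le hp hkp)
        · rw [τo j hjp.symm hjq.symm]
  -- (4)
  have hane : ∀ k, k ≠ p → aF (σ * Equiv.swap p q) k = aF σ k := by
    intro k hkp
    unfold aF
    rcases eq_or_ne q k with rfl | hkq
    · -- k = q
      have h1 : ¬ q ≤ σ q := not_le.2 (lt_trans hq hpq)
      rw [if_neg h1, if_neg fun c => h1 ((hE q).2 c), τq]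
      refine congrArg Finset.card (Finset.filter_congr fun j _ => ?_)
      refine and_congr_right fun hqj => ?_
      have hjq : j ≠ q := Ne.symm (ne_of_lt hqj)
      have hjp : j ≠ p := Ne.symm (ne_of_lt (lt_trans hpq hqj))
      rw [τo j hjp hjq]
      rcases H j (lt_trans hpq hqj) hjq with ⟨c1, c2⟩ | ⟨c1, c2⟩
      · exact iff_of_true c1 c2
      · exact iff_of_false (not_lt.2 (le_of_lt c1)) (not_lt.2 (le_of_lt c2))
    · by_cases hk : k ≤ σ k
      · rw [if_pos ((hE k).1 hk), if_pos hk, τo k hkp (Ne.symm hkq)]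
        by_cases hqk : q < k
        · have hpk : p < k := lt_trans hpq hqk
          refine (Finset.card_equiv (Equiv.swap p q) fun j => ?_).symm
          simp only [mem_filter, mem_univ, true_and, τapp, Equiv.swap_apply_self]
          rw [swap_lt_iff hpk hqk]
        · push_neg at hqk
          refine congrArg Finset.card (Finset.filter_congr fun j _ => ?_)
          refine and_congr_right fun hjk => ?_
          have hjq : j ≠ q := fun e => absurd (lt_of_lt_of_le (e ▸ hjk) hqk) (lt_irrefl q)
          rcases eq_or_ne p j with rfl | hjp
          · rw [τp]
            have hspk : σ p < σ k := lt_of_lt_of_le (lt_trans hp hjk) hk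
            have hsqk : σ q < σ k := lt_of_lt_of_le (lt_trans hq hjk) hk
            exact iff_of_false (not_lt.2 (le_of_lt hsqk)) (not_lt.2 (le_of_lt hspk))
          · rw [τo j hjp.symm hjq]
      · rw [if_neg fun c => hk ((hE k).2 c), if_neg hk, τo k hkp (Ne.symm hkq)]
        by_cases hkp' : k < p
        · have hkq' : k < q := lt_trans hkp' hpq
          refine (Finset.card_equiv (Equiv.swap p q) fun j => ?_).symm
          simp only [mem_filter, mem_univ, true_and, τapp, Equiv.swap_apply_self]
          rw [swap_gt_iff hkp' hkq']
        · push_neg at hkp'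
          have hpk : p < k := lt_of_le_of_ne hkp' (fun e => hkp e.symm)
          refine congrArg Finset.card (Finset.filter_congr fun j _ => ?_)
          refine and_congr_right fun hkj => ?_
          rcases eq_or_ne p j with rfl | hjp
          · exact absurd hkj (not_lt.2 (le_of_lt hpk))
          rcases eq_or_ne q j with rfl | hjq
          · rw [τq]
            rcases H k hpk (Ne.symm hkq) with ⟨c1, c2⟩ | ⟨c1, c2⟩
            · exact iff_of_false (not_lt.2 (le_of_lt c1)) (not_lt.2 (le_of_lt c2))
            · exact iff_of_true c1 c2
          · rw [τo j hjp.symm hjq.symm]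
  -- (5)
  have hp1 : ¬ p ≤ σ p := not_le.2 hp
  have hp2 : ¬ p ≤ (σ * Equiv.swap p q) p := by rw [τp]; exact not_le.2 hq
  have erase_eq :
      ((univ.filter fun j => p < j ∧ (σ * Equiv.swap p q) j < (σ * Equiv.swap p q) p).erase q)
        = ((univ.filter fun j => p < j ∧ σ j < σ p).erase q) := by
    ext j
    simp only [Finset.mem_erase, mem_filter, mem_univ, true_and]
    constructor
    · rintro ⟨hjq, hpj, hlt⟩
      refine ⟨hjq, hpj, ?_⟩
      rw [τp, τo j (Ne.symm (ne_of_lt hpj)) hjq] at hlt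
      rcases H j hpj hjq with ⟨c1, c2⟩ | ⟨c1, c2⟩
      · exact c1
      · exact absurd hlt (not_lt.2 (le_of_lt c2))
    · rintro ⟨hjq, hpj, hlt⟩
      refine ⟨hjq, hpj, ?_⟩
      rw [τp, τo j (Ne.symm (ne_of_lt hpj)) hjq]
      rcases H j hpj hjq with ⟨c1, c2⟩ | ⟨c1, c2⟩
      · exact c2
      · exact absurd hlt (not_lt.2 (le_of_lt c1))
  refine ⟨hE, hFs, hHF, hane, ?_, ?_⟩
  · -- inc : σ p < σ q
    intro hlt
    unfold aF
    rw [if_neg hp2, if_neg hp1]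
    have hmem : q ∈ univ.filter fun j =>
        p < j ∧ (σ * Equiv.swap p q) j < (σ * Equiv.swap p q) p := by
      simp only [mem_filter, mem_univ, true_and]
      exact ⟨hpq, by rw [τp, τq]; exact hlt⟩
    have hnmem : q ∉ univ.filter fun j => p < j ∧ σ j < σ p := by
      simp only [mem_filter, mem_univ, true_and]
      rintro ⟨-, c⟩
      exact absurd hlt (not_lt.2 (le_of_lt c))
    rw [← Finset.card_erase_add_one hmem, erase_eq, Finset.erase_eq_of_notMem hnmem]
  · -- dec : σ q < σ p
    intro hlt
    unfold aF
    rw [if_neg hp2, if_neg hp1]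
    have hmem : q ∈ univ.filter fun j => p < j ∧ σ j < σ p := by
      simp only [mem_filter, mem_univ, true_and]
      exact ⟨hpq, hlt⟩
    have hnmem : q ∉ univ.filter fun j =>
        p < j ∧ (σ * Equiv.swap p q) j < (σ * Equiv.swap p q) p := by
      simp only [mem_filter, mem_univ, true_and]
      rintro ⟨-, c⟩
      rw [τp, τq] at c
      exact absurd hlt (not_lt.2 (le_of_lt c))
    rw [← Finset.card_erase_add_one hmem, ← erase_eq, Finset.erase_eq_of_notMem hnmem]

def Same (σ τ : Equiv.Perm (Fin n)) : Prop :=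
  (∀ k, k ≤ σ k ↔ k ≤ τ k) ∧ (∀ v, σ.symm v ≤ v ↔ τ.symm v ≤ v) ∧ hF σ = hF τ

lemma Same.refl (σ : Equiv.Perm (Fin n)) : Same σ σ :=
  ⟨fun _ => Iff.rfl, fun _ => Iff.rfl, Eq.refl _⟩

lemma Same.trans {σ τ ρ : Equiv.Perm (Fin n)} (h1 : Same σ τ) (h2 : Same τ ρ) : Same σ ρ :=
  ⟨fun k => (h1.1 k).trans (h2.1 k), fun v => (h1.2.1 v).trans (h2.2.1 v),
    h1.2.2.trans h2.2.2⟩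

lemma move_inc (σ : Equiv.Perm (Fin n)) (i : Fin n) (hlt : aF σ i < hF σ i) :
    ∃ τ, Same σ τ ∧ (∀ k, k ≠ i → aF τ k = aF σ k) ∧ aF τ i = aF σ i + 1 := by
  have hc : 0 < cF σ i := by have := aF_add_cF σ i; omega
  by_cases hi : i ≤ σ i
  · unfold cF at hc
    rw [if_pos hi] at hc
    obtain ⟨p, hpC, hmax⟩ := Finset.exists_max_image _ σ (Finset.card_pos.1 hc)
    simp only [mem_filter, mem_univ, true_and] at hpC
    obtain ⟨hpi, hip, hps⟩ := hpC
    have H : ∀ j, j < i → j ≠ p → (σ j < σ p ∧ σ j < σ i) ∨ (σ p < σ j ∧ σ i < σ j) := by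
      intro j hji hjp
      rcases lt_or_gt_of_ne (fun e => absurd (σ.injective e) (ne_of_lt hji)) with h | h
      · left
        refine ⟨?_, h⟩
        rcases lt_or_gt_of_ne (fun e => absurd (σ.injective e) hjp) with h2 | h2
        · exact h2
        · have hjC : j ∈ univ.filter fun j => j < i ∧ i ≤ σ j ∧ σ j < σ i := by
            simp only [mem_filter, mem_univ, true_and]
            exact ⟨hji, le_trans hip (le_of_lt h2), h⟩
          exact absurd (hmax j hjC) (not_le.2 h2)
      · exact Or.inr ⟨lt_trans hps h, h⟩
    obtain ⟨hE, hFs, hHF, hane, hinc, -⟩ := moveU σ hpi hip hi H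
    exact ⟨σ * Equiv.swap p i, ⟨hE, hFs, hHF⟩, fun k hk => hane k hk, hinc hps⟩
  · push_neg at hi
    unfold cF at hc
    rw [if_neg (not_le.2 hi)] at hc
    obtain ⟨q, hqC, hmin⟩ := Finset.exists_min_image _ σ (Finset.card_pos.1 hc)
    simp only [mem_filter, mem_univ, true_and] at hqC
    obtain ⟨hiq, hsq, hqi⟩ := hqC
    have H : ∀ j, i < j → j ≠ q → (σ j < σ i ∧ σ j < σ q) ∨ (σ i < σ j ∧ σ q < σ j) := by
      intro j hij hjq
      rcases lt_or_gt_of_ne (fun e => absurd (σ.injective e) (Ne.symm (ne_of_lt hij))) with h | h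
      · exact Or.inl ⟨h, lt_trans h hsq⟩
      · right
        refine ⟨h, ?_⟩
        rcases lt_or_gt_of_ne (fun e => absurd (σ.injective e) (fun e2 => hjq e2)) with h2 | h2
        · have hjC : j ∈ univ.filter fun j => i < j ∧ σ i < σ j ∧ σ j < i := by
            simp only [mem_filter, mem_univ, true_and]
            exact ⟨hij, h, lt_trans h2 hqi⟩
          exact absurd (hmin j hjC) (not_le.2 h2)
        · exact h2
    obtain ⟨hE, hFs, hHF, hane, hinc, -⟩ := moveL σ hiq hi hqi H
    exact ⟨σ * Equiv.swap i q, ⟨hE, hFs, hHF⟩, fun k hk => hane k hk, hinc hsq⟩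

lemma move_dec (σ : Equiv.Perm (Fin n)) (i : Fin n) (hpos : aF σ i ≠ 0) :
    ∃ τ, Same σ τ ∧ (∀ k, k ≠ i → aF τ k = aF σ k) ∧ aF σ i = aF τ i + 1 := by
  have hc : 0 < aF σ i := Nat.pos_of_ne_zero hpos
  by_cases hi : i ≤ σ i
  · unfold aF at hc
    rw [if_pos hi] at hc
    obtain ⟨p, hpD, hmin⟩ := Finset.exists_min_image _ σ (Finset.card_pos.1 hc)
    simp only [mem_filter, mem_univ, true_and] at hpD
    obtain ⟨hpi, hps⟩ := hpD
    have H : ∀ j, j < i → j ≠ p → (σ j < σ p ∧ σ j < σ i) ∨ (σ p < σ j ∧ σ i < σ j) := by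
      intro j hji hjp
      rcases lt_or_gt_of_ne (fun e => absurd (σ.injective e) (ne_of_lt hji)) with h | h
      · exact Or.inl ⟨lt_trans h hps, h⟩
      · right
        refine ⟨?_, h⟩
        have hjD : j ∈ univ.filter fun j => j < i ∧ σ i < σ j := by
          simp only [mem_filter, mem_univ, true_and]
          exact ⟨hji, h⟩
        exact lt_of_le_of_ne (hmin j hjD) fun e => hjp (σ.injective e).symm
    obtain ⟨hE, hFs, hHF, hane, -, hdec⟩ :=
      moveU σ hpi (le_of_lt (lt_of_le_of_lt hi hps)) hi H
    exact ⟨σ * Equiv.swap p i, ⟨hE, hFs, hHF⟩, fun k hk => hane k hk, hdec hps⟩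
  · push_neg at hi
    unfold aF at hc
    rw [if_neg (not_le.2 hi)] at hc
    obtain ⟨q, hqD, hmax⟩ := Finset.exists_max_image _ σ (Finset.card_pos.1 hc)
    simp only [mem_filter, mem_univ, true_and] at hqD
    obtain ⟨hiq, hqs⟩ := hqD
    have H : ∀ j, i < j → j ≠ q → (σ j < σ i ∧ σ j < σ q) ∨ (σ i < σ j ∧ σ q < σ j) := by
      intro j hij hjq
      rcases lt_or_gt_of_ne (fun e => absurd (σ.injective e) (Ne.symm (ne_of_lt hij))) with h | h
      · left
        refine ⟨h, ?_⟩
        have hjD : j ∈ univ.filter fun j => i < j ∧ σ j < σ i := by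
          simp only [mem_filter, mem_univ, true_and]
          exact ⟨hij, h⟩
        exact lt_of_le_of_ne (hmax j hjD) fun e => hjq (σ.injective e)
      · exact Or.inr ⟨h, lt_trans hqs h⟩
    obtain ⟨hE, hFs, hHF, hane, -, hdec⟩ := moveL σ hiq hi (lt_trans hqs hi) H
    exact ⟨σ * Equiv.swap i q, ⟨hE, hFs, hHF⟩, fun k hk => hane k hk, hdec hqs⟩

lemma sur (σ : Equiv.Perm (Fin n)) (α : Fin n → ℕ) (hα : ∀ i, α i ≤ hF σ i) :
    ∃ τ, Same σ τ ∧ aF τ = α := by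
  suffices h : ∀ (N : ℕ) (σ : Equiv.Perm (Fin n)), (∀ i, α i ≤ hF σ i) →
      (∑ i : Fin n, ((α i - aF σ i) + (aF σ i - α i))) ≤ N → ∃ τ, Same σ τ ∧ aF τ = α by
    exact h _ σ hα le_rfl
  intro N
  induction N with
  | zero =>
    intro σ hα hsum
    refine ⟨σ, Same.refl σ, funext fun i => ?_⟩
    have h0 : (α i - aF σ i) + (aF σ i - α i) = 0 := by
      have := Finset.single_le_sum (f := fun j => (α j - aF σ j) + (aF σ j - α j))
        (fun j _ => Nat.zero_le _) (Finset.mem_univ i)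
      have h2 : (α i - aF σ i) + (aF σ i - α i) ≤
          ∑ j : Fin n, ((α j - aF σ j) + (aF σ j - α j)) := this
      omega
    omega
  | succ N ih =>
    intro σ hα hsum
    by_cases h : ∀ i, aF σ i = α i
    · exact ⟨σ, Same.refl σ, funext h⟩
    · push_neg at h
      obtain ⟨i, hi⟩ := h
      have key : ∃ σ', Same σ σ' ∧ (∀ k, k ≠ i → aF σ' k = aF σ k) ∧
          ((α i - aF σ' i) + (aF σ' i - α i)) + 1 = ((α i - aF σ i) + (aF σ i - α i)) := by
        rcases lt_or_gt_of_ne hi with hlt | hgt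
        · obtain ⟨σ', hs, hk, hinc⟩ := move_inc σ i (lt_of_lt_of_le hlt (hα i))
          exact ⟨σ', hs, hk, by omega⟩
        · obtain ⟨σ', hs, hk, hdec⟩ := move_dec σ i (by omega)
          exact ⟨σ', hs, hk, by omega⟩
      obtain ⟨σ', hs, hk, hterm⟩ := key
      have hα' : ∀ j, α j ≤ hF σ' j := fun j => hs.2.2 ▸ hα j
      have hsum' : (∑ j : Fin n, ((α j - aF σ' j) + (aF σ' j - α j))) ≤ N := by
        have hlt2 : (∑ j : Fin n, ((α j - aF σ' j) + (aF σ' j - α j))) <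
            (∑ j : Fin n, ((α j - aF σ j) + (aF σ j - α j))) := by
          refine Finset.sum_lt_sum (fun j _ => ?_) ⟨i, Finset.mem_univ i, by omega⟩
          rcases eq_or_ne j i with rfl | hj
          · omega
          · rw [hk j hj]
        omega
      obtain ⟨τ, hs2, ha⟩ := ih σ' hα' hsum'
      exact ⟨τ, hs.trans hs2, ha⟩

lemma countU (σ : Equiv.Perm (Fin n)) (i : Fin n) (hi : i ≤ σ i) :
    aF σ i = (univ.filter fun v => (i ≤ v ∧ σ.symm v ≤ i) ∧ σ i < v).card := by
  unfold aF
  rw [if_pos hi]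
  refine Finset.card_bij (fun j _ => σ j) ?_ ?_ ?_
  · intro j hj
    simp only [mem_filter, mem_univ, true_and] at hj ⊢
    exact ⟨⟨le_of_lt (lt_of_le_of_lt hi hj.2), by rw [Equiv.symm_apply_apply]; exact le_of_lt hj.1⟩,
      hj.2⟩
  · intro j1 h1 j2 h2 e
    exact σ.injective e
  · intro v hv
    simp only [mem_filter, mem_univ, true_and] at hv
    obtain ⟨⟨h1, h2⟩, h3⟩ := hv
    have h4 : σ.symm v < i := lt_of_le_of_ne h2 fun e => by
      rw [← e, Equiv.apply_symm_apply] at h3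
      exact lt_irrefl v (lt_trans h3 h3)
    refine ⟨σ.symm v, ?_, Equiv.apply_symm_apply σ v⟩
    simp only [mem_filter, mem_univ, true_and]
    exact ⟨h4, by rw [Equiv.apply_symm_apply]; exact h3⟩

lemma countL (σ : Equiv.Perm (Fin n)) (i : Fin n) (hi : ¬ i ≤ σ i) :
    aF σ i = (univ.filter fun v => (v ≤ i ∧ i ≤ σ.symm v) ∧ v < σ i).card := by
  unfold aF
  rw [if_neg hi]
  push_neg at hi
  refine Finset.card_bij (fun j _ => σ j) ?_ ?_ ?_
  · intro j hj
    simp only [mem_filter, mem_univ, true_and] at hj ⊢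
    exact ⟨⟨le_of_lt (lt_trans hj.2 hi), by rw [Equiv.symm_apply_apply]; exact le_of_lt hj.1⟩,
      hj.2⟩
  · intro j1 h1 j2 h2 e
    exact σ.injective e
  · intro v hv
    simp only [mem_filter, mem_univ, true_and] at hv
    obtain ⟨⟨h1, h2⟩, h3⟩ := hv
    have h4 : i < σ.symm v := lt_of_le_of_ne h2 fun e => by
      rw [e, Equiv.apply_symm_apply] at h3
      exact lt_irrefl v (lt_trans h3 h3)
    refine ⟨σ.symm v, ?_, Equiv.apply_symm_apply σ v⟩
    simp only [mem_filter, mem_univ, true_and]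
    exact ⟨h4, by rw [Equiv.apply_symm_apply]; exact h3⟩

lemma inj (σ τ : Equiv.Perm (Fin n)) (hE : ∀ k, k ≤ σ k ↔ k ≤ τ k)
    (hFs : ∀ v, σ.symm v ≤ v ↔ τ.symm v ≤ v) (ha : aF σ = aF τ) : σ = τ := by
  have up : ∀ i : Fin n, i ≤ σ i → σ i = τ i := by
    by_contra hcon
    push_neg at hcon
    obtain ⟨i0, hi0, hne0⟩ := hcon
    have hS : (univ.filter fun i : Fin n => i ≤ σ i ∧ σ i ≠ τ i).Nonempty :=
      ⟨i0, by simp only [mem_filter, mem_univ, true_and]; exact ⟨hi0, hne0⟩⟩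
    obtain ⟨i, hiS, hmax⟩ := Finset.exists_max_image _ (fun j => j) hS
    simp only [mem_filter, mem_univ, true_and] at hiS
    obtain ⟨hi, hne⟩ := hiS
    have IH : ∀ j, i < j → j ≤ σ j → σ j = τ j := by
      intro j hij hj
      by_contra hne2
      have : j ∈ univ.filter fun i : Fin n => i ≤ σ i ∧ σ i ≠ τ i := by
        simp only [mem_filter, mem_univ, true_and]; exact ⟨hj, hne2⟩
      exact absurd (hmax j this) (not_le.2 hij)
    have hi' : i ≤ τ i := (hE i).1 hi
    have hXY : ∀ v, (i ≤ v ∧ σ.symm v ≤ i) ↔ (i ≤ v ∧ τ.symm v ≤ i) := by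
      intro v
      constructor
      · rintro ⟨h1, h2⟩
        refine ⟨h1, ?_⟩
        by_contra h3
        push_neg at h3
        by_cases hw2 : τ.symm v ≤ τ (τ.symm v)
        · have h5 : σ (τ.symm v) = τ (τ.symm v) := IH _ h3 ((hE _).2 hw2)
          have e : σ (τ.symm v) = v := by rw [h5, Equiv.apply_symm_apply]
          have h6 : σ.symm v = τ.symm v := σ.injective (by rw [Equiv.apply_symm_apply, e])
          rw [h6] at h2
          exact absurd h2 (not_le.2 h3)
        · push_neg at hw2
          rw [Equiv.apply_symm_apply] at hw2
          have h5 : τ.symm v ≤ v := (hFs v).1 (le_trans h2 h1)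
          exact absurd h5 (not_le.2 hw2)
      · rintro ⟨h1, h2⟩
        refine ⟨h1, ?_⟩
        by_contra h3
        push_neg at h3
        by_cases hw2 : σ.symm v ≤ σ (σ.symm v)
        · have h5 : σ (σ.symm v) = τ (σ.symm v) := IH _ h3 hw2
          have e : τ (σ.symm v) = v := by rw [← h5, Equiv.apply_symm_apply]
          have h6 : τ.symm v = σ.symm v := τ.injective (by rw [Equiv.apply_symm_apply, e])
          rw [h6] at h2
          exact absurd h2 (not_le.2 h3)
        · push_neg at hw2
          rw [Equiv.apply_symm_apply] at hw2
          have h5 : σ.symm v ≤ v := (hFs v).2 (le_trans h2 h1)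
          exact absurd h5 (not_le.2 hw2)
    have hc1 : aF σ i = (univ.filter fun v => (i ≤ v ∧ σ.symm v ≤ i) ∧ σ i < v).card :=
      countU σ i hi
    have hc2 : aF τ i = (univ.filter fun v => (i ≤ v ∧ σ.symm v ≤ i) ∧ τ i < v).card := by
      rw [countU τ i hi']
      refine congrArg Finset.card (Finset.filter_congr fun v _ => ?_)
      exact and_congr_left fun _ => ((hXY v).symm)
    have hPσ : (i ≤ σ i ∧ σ.symm (σ i) ≤ i) := ⟨hi, by rw [Equiv.symm_apply_apply]⟩
    have hPτ : (i ≤ τ i ∧ σ.symm (τ i) ≤ i) :=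
      (hXY (τ i)).2 ⟨hi', by rw [Equiv.symm_apply_apply]⟩
    have hceq : (univ.filter fun v => (i ≤ v ∧ σ.symm v ≤ i) ∧ σ i < v).card =
        (univ.filter fun v => (i ≤ v ∧ σ.symm v ≤ i) ∧ τ i < v).card := by
      rw [← hc1, ← hc2, ha]
    rcases lt_trichotomy (σ i) (τ i) with hlt | heq | hgt
    · have hss : (univ.filter fun v => (i ≤ v ∧ σ.symm v ≤ i) ∧ τ i < v) ⊂
          (univ.filter fun v => (i ≤ v ∧ σ.symm v ≤ i) ∧ σ i < v) := by
        constructor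
        · intro v hv
          simp only [mem_filter, mem_univ, true_and] at hv ⊢
          exact ⟨hv.1, lt_trans hlt hv.2⟩
        · intro hsub
          have : τ i ∈ univ.filter fun v => (i ≤ v ∧ σ.symm v ≤ i) ∧ σ i < v := by
            simp only [mem_filter, mem_univ, true_and]
            exact ⟨hPτ, hlt⟩
          have := hsub this
          simp only [mem_filter, mem_univ, true_and] at this
          exact lt_irrefl _ this.2
      exact absurd hceq (ne_of_gt (Finset.card_lt_card hss))
    · exact hne heq
    · have hss : (univ.filter fun v => (i ≤ v ∧ σ.symm v ≤ i) ∧ σ i < v) ⊂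
          (univ.filter fun v => (i ≤ v ∧ σ.symm v ≤ i) ∧ τ i < v) := by
        constructor
        · intro v hv
          simp only [mem_filter, mem_univ, true_and] at hv ⊢
          exact ⟨hv.1, lt_trans hgt hv.2⟩
        · intro hsub
          have : σ i ∈ univ.filter fun v => (i ≤ v ∧ σ.symm v ≤ i) ∧ τ i < v := by
            simp only [mem_filter, mem_univ, true_and]
            exact ⟨hPσ, hgt⟩
          have := hsub this
          simp only [mem_filter, mem_univ, true_and] at this
          exact lt_irrefl _ this.2
      exact absurd hceq (ne_of_lt (Finset.card_lt_card hss))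
  have low : ∀ i : Fin n, ¬ i ≤ σ i → σ i = τ i := by
    by_contra hcon
    push_neg at hcon
    obtain ⟨i0, hi0, hne0⟩ := hcon
    have hS : (univ.filter fun i : Fin n => ¬ i ≤ σ i ∧ σ i ≠ τ i).Nonempty :=
      ⟨i0, by simp only [mem_filter, mem_univ, true_and]; exact ⟨not_le.2 hi0, hne0⟩⟩
    obtain ⟨i, hiS, hmin⟩ := Finset.exists_min_image _ (fun j => j) hS
    simp only [mem_filter, mem_univ, true_and] at hiS
    obtain ⟨hi, hne⟩ := hiS
    have IH : ∀ j, j < i → ¬ j ≤ σ j → σ j = τ j := by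
      intro j hij hj
      by_contra hne2
      have : j ∈ univ.filter fun i : Fin n => ¬ i ≤ σ i ∧ σ i ≠ τ i := by
        simp only [mem_filter, mem_univ, true_and]; exact ⟨hj, hne2⟩
      exact absurd (hmin j this) (not_le.2 hij)
    have hi' : ¬ i ≤ τ i := fun c => hi ((hE i).2 c)
    have hXY : ∀ v, (v ≤ i ∧ i ≤ σ.symm v) ↔ (v ≤ i ∧ i ≤ τ.symm v) := by
      intro v
      constructor
      · rintro ⟨h1, h2⟩
        refine ⟨h1, ?_⟩
        by_contra h3
        push_neg at h3
        by_cases hw2 : τ.symm v ≤ τ (τ.symm v)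
        · rw [Equiv.apply_symm_apply] at hw2
          have h6 : σ.symm v ≤ v := (hFs v).2 hw2
          have h7 : σ.symm v = i := le_antisymm (le_trans h6 h1) h2
          have h8 : σ i = v := by rw [← h7, Equiv.apply_symm_apply]
          have h9 : v = i := le_antisymm h1 (le_trans h2 h6)
          exact hi (le_of_eq (by rw [h8, h9]))
        · have hσw : ¬ τ.symm v ≤ σ (τ.symm v) := fun c => hw2 ((hE _).1 c)
          have h5 : σ (τ.symm v) = τ (τ.symm v) := IH _ h3 hσw
          have e : σ (τ.symm v) = v := by rw [h5, Equiv.apply_symm_apply]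
          have h6 : σ.symm v = τ.symm v := σ.injective (by rw [Equiv.apply_symm_apply, e])
          rw [h6] at h2
          exact absurd h3 (not_lt.2 h2)
      · rintro ⟨h1, h2⟩
        refine ⟨h1, ?_⟩
        by_contra h3
        push_neg at h3
        by_cases hw2 : σ.symm v ≤ σ (σ.symm v)
        · rw [Equiv.apply_symm_apply] at hw2
          have h6 : τ.symm v ≤ v := (hFs v).1 hw2
          have h7 : τ.symm v = i := le_antisymm (le_trans h6 h1) h2
          have h8 : τ i = v := by rw [← h7, Equiv.apply_symm_apply]
          have h9 : v = i := le_antisymm h1 (le_trans h2 h6)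
          exact hi' (le_of_eq (by rw [h8, h9]))
        · have h5 : σ (σ.symm v) = τ (σ.symm v) := IH _ h3 hw2
          have e : τ (σ.symm v) = v := by rw [← h5, Equiv.apply_symm_apply]
          have h6 : τ.symm v = σ.symm v := τ.injective (by rw [Equiv.apply_symm_apply, e])
          rw [h6] at h2
          exact absurd h3 (not_lt.2 h2)
    have hc1 : aF σ i = (univ.filter fun v => (v ≤ i ∧ i ≤ σ.symm v) ∧ v < σ i).card :=
      countL σ i hi
    have hc2 : aF τ i = (univ.filter fun v => (v ≤ i ∧ i ≤ σ.symm v) ∧ v < τ i).card := by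
      rw [countL τ i hi']
      refine congrArg Finset.card (Finset.filter_congr fun v _ => ?_)
      exact and_congr_left fun _ => ((hXY v).symm)
    push_neg at hi hi'
    have hPσ : (σ i ≤ i ∧ i ≤ σ.symm (σ i)) := ⟨le_of_lt hi, by rw [Equiv.symm_apply_apply]⟩
    have hPτ : (τ i ≤ i ∧ i ≤ σ.symm (τ i)) :=
      (hXY (τ i)).2 ⟨le_of_lt hi', by rw [Equiv.symm_apply_apply]⟩
    have hceq : (univ.filter fun v => (v ≤ i ∧ i ≤ σ.symm v) ∧ v < σ i).card =
        (univ.filter fun v => (v ≤ i ∧ i ≤ σ.symm v) ∧ v < τ i).card := by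
      rw [← hc1, ← hc2, ha]
    rcases lt_trichotomy (σ i) (τ i) with hlt | heq | hgt
    · have hss : (univ.filter fun v => (v ≤ i ∧ i ≤ σ.symm v) ∧ v < σ i) ⊂
          (univ.filter fun v => (v ≤ i ∧ i ≤ σ.symm v) ∧ v < τ i) := by
        constructor
        · intro v hv
          simp only [mem_filter, mem_univ, true_and] at hv ⊢
          exact ⟨hv.1, lt_trans hv.2 hlt⟩
        · intro hsub
          have hmem : σ i ∈ univ.filter fun v => (v ≤ i ∧ i ≤ σ.symm v) ∧ v < τ i := by
            simp only [mem_filter, mem_univ, true_and]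
            exact ⟨hPσ, hlt⟩
          have := hsub hmem
          simp only [mem_filter, mem_univ, true_and] at this
          exact lt_irrefl _ this.2
      exact absurd hceq (ne_of_lt (Finset.card_lt_card hss))
    · exact hne heq
    · have hss : (univ.filter fun v => (v ≤ i ∧ i ≤ σ.symm v) ∧ v < τ i) ⊂
          (univ.filter fun v => (v ≤ i ∧ i ≤ σ.symm v) ∧ v < σ i) := by
        constructor
        · intro v hv
          simp only [mem_filter, mem_univ, true_and] at hv ⊢
          exact ⟨hv.1, lt_trans hv.2 hgt⟩
        · intro hsub
          have : τ i ∈ univ.filter fun v => (v ≤ i ∧ i ≤ σ.symm v) ∧ v < σ i := by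
            simp only [mem_filter, mem_univ, true_and]
            exact ⟨hPτ, hgt⟩
          have := hsub this
          simp only [mem_filter, mem_univ, true_and] at this
          exact lt_irrefl _ this.2
      exact absurd hceq (ne_of_gt (Finset.card_lt_card hss))
  refine Equiv.ext fun k => ?_
  by_cases hk : k ≤ σ k
  · exact up k hk
  · exact low k hk

lemma main_le (n k ℓ m : ℕ) :
    ((univ : Finset (Equiv.Perm (Fin n))).filter fun σ =>
        wexc n σ = k ∧ crossings n σ = ℓ ∧ nestings n σ = m).card ≤
    ((univ : Finset (Equiv.Perm (Fin n))).filter fun σ =>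
        wexc n σ = k ∧ crossings n σ = m ∧ nestings n σ = ℓ).card := by
  classical
  have key : ∀ σ : Equiv.Perm (Fin n), ∃ τ, Same σ τ ∧ aF τ = cF σ :=
    fun σ => sur σ (cF σ) (fun i => by have := aF_add_cF σ i; omega)
  choose Φ hΦ1 hΦ2 using key
  have hcF : ∀ σ, cF (Φ σ) = aF σ := by
    intro σ
    funext i
    have h1 := aF_add_cF (Φ σ) i
    have h2 := aF_add_cF σ i
    have h3 : hF (Φ σ) i = hF σ i := by rw [← (hΦ1 σ).2.2]
    have h4 : aF (Φ σ) i = cF σ i := by rw [hΦ2 σ]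
    omega
  have hwexc : ∀ σ, wexc n (Φ σ) = wexc n σ := by
    intro σ
    unfold wexc
    refine congrArg Finset.card (Finset.filter_congr fun i _ => ?_)
    exact ((hΦ1 σ).1 i).symm
  apply Finset.card_le_card_of_injOn Φ
  · intro σ hσ
    simp only [Finset.mem_coe, mem_filter, mem_univ, true_and] at hσ ⊢
    obtain ⟨hw, hcr, hne⟩ := hσ
    refine ⟨by rw [hwexc]; exact hw, ?_, ?_⟩
    · rw [crossings_eq, hcF σ, ← nestings_eq]
      exact hne
    · rw [nestings_eq, hΦ2 σ, ← crossings_eq]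
      exact hcr
  · intro σ1 h1 σ2 h2 he
    apply inj
    · intro kk
      exact ((hΦ1 σ1).1 kk).trans (by rw [he]; exact ((hΦ1 σ2).1 kk).symm)
    · intro v
      exact ((hΦ1 σ1).2.1 v).trans (by rw [he]; exact ((hΦ1 σ2).2.1 v).symm)
    · have e1 : cF (Φ σ1) = aF σ1 := hcF σ1
      have e2 : cF (Φ σ2) = aF σ2 := hcF σ2
      rw [← e1, ← e2, he]


/-- The number of permutations of [n] with k weak exceedances, ℓ crossings and
m nestings equals the number with k weak exceedances, m crossings and ℓ nestings. -/
theorem stmt9 (n k ℓ m : ℕ) :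
    ((univ : Finset (Equiv.Perm (Fin n))).filter fun σ =>
        wexc n σ = k ∧ crossings n σ = ℓ ∧ nestings n σ = m).card =
    ((univ : Finset (Equiv.Perm (Fin n))).filter fun σ =>
        wexc n σ = k ∧ crossings n σ = m ∧ nestings n σ = ℓ).card := by
  exact le_antisymm (main_le n k ℓ m) (main_le n k m ℓ)
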